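/- Let C ⊆ E be a convex set of diameter at most D (i.e., ‖x - y‖ ≤ D for all x, y ∈ C) with D > 0, let T : E → E map C into C and be γ-Lipschitz on C with γ > 1, and let β ∈ (0,1). Set λ = 1 - β/γ, let x₀ ∈ C, and let the sequence (x_k) be defined by x_{k+1} = λ·x₀ + (1-λ)·T(x_k). Then for any ε with 0 < ε ≤ ‖T(x₀) - x₀‖, taking k = ⌈ln(‖T(x₀) - x₀‖/ε)/ln(1/β)⌉ we have ‖T(x_k) - x_k‖ ≤ (γ/β - 1)·D + ε. -/

import Mathlib

/-- Attainable fixed-point error for a γ-Lipschitz operator with γ > 1 mapping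
a convex set of diameter at most `D` to itself: with step size `λ = 1 - β/γ`,
after `k = ⌈ln(‖T x₀ - x₀‖/ε)/ln(1/β)⌉` iterations we have
`‖T x_k - x_k‖ ≤ (γ/β - 1) D + ε`. -/
theorem fixed_step_halpern_expansive_error_bound
    {E : Type*} [NormedAddCommGroup E] [NormedSpace ℝ E]
    (C : Set E) (hC : Convex ℝ C)
    (D : ℝ) (hD0 : 0 < D) (hdiam : ∀ x ∈ C, ∀ y ∈ C, ‖x - y‖ ≤ D)
    (T : E → E) (hTC : ∀ x ∈ C, T x ∈ C)
    (γ : ℝ) (hγ : 1 < γ)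
    (hT : ∀ x ∈ C, ∀ y ∈ C, ‖T x - T y‖ ≤ γ * ‖x - y‖)
    (β : ℝ) (hβ0 : 0 < β) (hβ1 : β < 1)
    (l : ℝ) (hl : l = 1 - β / γ)
    (x₀ : E) (hx₀C : x₀ ∈ C)
    (x : ℕ → E) (hx0 : x 0 = x₀)
    (hx : ∀ k : ℕ, x (k + 1) = l • x₀ + (1 - l) • T (x k)) :
    ∀ ε : ℝ, 0 < ε → ε ≤ ‖T x₀ - x₀‖ →
      ∀ k : ℕ, k = ⌈Real.log (‖T x₀ - x₀‖ / ε) / Real.log (1 / β)⌉₊ →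
        ‖T (x k) - x k‖ ≤ (γ / β - 1) * D + ε := by
  intro ε hε hεr k hk
  have hγ0 : (0:ℝ) < γ := by linarith
  have hr0pos : 0 < ‖T x₀ - x₀‖ := lt_of_lt_of_le hε hεr
  have hβγ : β / γ < 1 := (div_lt_one hγ0).2 (by linarith)
  have hβγ0 : 0 < β / γ := div_pos hβ0 hγ0
  have hl0 : 0 < l := by rw [hl]; linarith
  have hl1 : l < 1 := by rw [hl]; linarith
  have h1l : 1 - l = β / γ := by rw [hl]; ring
  -- iterates stay in C
  have hmem : ∀ n, x n ∈ C := by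
    intro n
    induction n with
    | zero => rw [hx0]; exact hx₀C
    | succ n ih =>
      rw [hx n]
      exact hC hx₀C (hTC _ ih) hl0.le (by linarith) (by ring)
  -- consecutive differences contract
  have hd : ∀ n, ‖x (n+1) - x n‖ ≤ β ^ n * ((β / γ) * ‖T x₀ - x₀‖) := by
    intro n
    induction n with
    | zero =>
      have h1 : x 1 - x 0 = (1 - l) • (T x₀ - x₀) := by
        rw [hx 0, hx0]; module
      rw [h1, norm_smul, Real.norm_eq_abs, abs_of_nonneg (by linarith), h1l]
      simp
    | succ n ih =>
      have h1 : x (n+2) - x (n+1) = (1 - l) • (T (x (n+1)) - T (x n)) := by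
        rw [hx (n+1), hx n]; module
      have h2 : ‖x (n+2) - x (n+1)‖ = (1 - l) * ‖T (x (n+1)) - T (x n)‖ := by
        rw [h1, norm_smul, Real.norm_eq_abs, abs_of_nonneg (by linarith)]
      have h3 : ‖T (x (n+1)) - T (x n)‖ ≤ γ * ‖x (n+1) - x n‖ :=
        hT _ (hmem _) _ (hmem _)
      have h1lγ : (1 - l) * γ = β := by rw [h1l]; field_simp
      calc ‖x (n+2) - x (n+1)‖ = (1 - l) * ‖T (x (n+1)) - T (x n)‖ := h2
        _ ≤ (1 - l) * (γ * ‖x (n+1) - x n‖) := by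
            apply mul_le_mul_of_nonneg_left h3 (by linarith)
        _ = β * ‖x (n+1) - x n‖ := by rw [← h1lγ]; ring
        _ ≤ β * (β ^ n * ((β / γ) * ‖T x₀ - x₀‖)) := by
            apply mul_le_mul_of_nonneg_left ih hβ0.le
        _ = β ^ (n+1) * ((β / γ) * ‖T x₀ - x₀‖) := by ring
  -- residual bound
  have hres : ∀ n, ‖T (x n) - x n‖ ≤ l * D + β ^ n * ((β / γ) * ‖T x₀ - x₀‖) := by
    intro n
    have hsplit : T (x n) - x n = (T (x n) - x (n+1)) + (x (n+1) - x n) := by abel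
    have h1 : T (x n) - x (n+1) = l • (T (x n) - x₀) := by rw [hx n]; module
    have h2 : ‖T (x n) - x (n+1)‖ ≤ l * D := by
      rw [h1, norm_smul, Real.norm_eq_abs, abs_of_nonneg hl0.le]
      exact mul_le_mul_of_nonneg_left (hdiam _ (hTC _ (hmem n)) _ hx₀C) hl0.le
    calc ‖T (x n) - x n‖ ≤ ‖T (x n) - x (n+1)‖ + ‖x (n+1) - x n‖ := by
          rw [hsplit]; exact norm_add_le _ _
      _ ≤ l * D + β ^ n * ((β / γ) * ‖T x₀ - x₀‖) := add_le_add h2 (hd n)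
  -- the chosen k makes β^k * r₀ ≤ ε
  have hlogβ : 0 < Real.log (1 / β) := Real.log_pos (by rw [lt_div_iff₀ hβ0]; linarith)
  have hkge : Real.log (‖T x₀ - x₀‖ / ε) / Real.log (1 / β) ≤ (k : ℝ) := by
    rw [hk]; exact Nat.le_ceil _
  have hklog : Real.log (‖T x₀ - x₀‖ / ε) ≤ (k : ℝ) * Real.log (1 / β) := by
    rw [div_le_iff₀ hlogβ] at hkge; linarith
  have hpow : β ^ k * ‖T x₀ - x₀‖ ≤ ε := by
    have hβk : (0:ℝ) < β ^ k := pow_pos hβ0 k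
    rw [← Real.log_le_log_iff (mul_pos hβk hr0pos) hε, Real.log_mul (ne_of_gt hβk)
      (ne_of_gt hr0pos), Real.log_pow]
    have h1 : Real.log (1 / β) = - Real.log β := by
      rw [Real.log_div one_ne_zero (ne_of_gt hβ0), Real.log_one]; ring
    have h2 : Real.log (‖T x₀ - x₀‖ / ε) = Real.log ‖T x₀ - x₀‖ - Real.log ε :=
      Real.log_div (ne_of_gt hr0pos) (ne_of_gt hε)
    rw [h1] at hklog
    rw [h2] at hklog
    linarith
  -- final combination
  have hAM : l * D ≤ (γ / β - 1) * D := by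
    apply mul_le_mul_of_nonneg_right _ hD0.le
    rw [hl]
    rw [div_sub' (ne_of_gt hβ0), le_div_iff₀ hβ0]
    nlinarith [sq_nonneg (γ - β), mul_pos hβ0 hγ0, div_mul_cancel₀ β (ne_of_gt hγ0)]
  have htail : β ^ k * ((β / γ) * ‖T x₀ - x₀‖) ≤ ε := by
    calc β ^ k * ((β / γ) * ‖T x₀ - x₀‖) ≤ β ^ k * (1 * ‖T x₀ - x₀‖) := by
          apply mul_le_mul_of_nonneg_left _ (pow_pos hβ0 k).le
          exact mul_le_mul_of_nonneg_right hβγ.le (norm_nonneg _)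
      _ = β ^ k * ‖T x₀ - x₀‖ := by ring
      _ ≤ ε := hpow
  calc ‖T (x k) - x k‖ ≤ l * D + β ^ k * ((β / γ) * ‖T x₀ - x₀‖) := hres k
    _ ≤ (γ / β - 1) * D + ε := add_le_add hAM htail
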